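/- Let α, γ be real numbers with γ not an integer. Then for all real t: ( (α−1) t / ( (γ−1)(γ−2) ) ) · ₁F₁(α; γ; t) · ₁F₁(2−α; 3−γ; −t) + ₁F₁(1−α; 2−γ; −t) · ₁F₁(α−1; γ−1; t) = 1. -/

import Mathlib

open Finset

/-- Pochhammer symbol `(a)ₙ = a(a+1)⋯(a+n-1)` for natural `n`. -/
noncomputable def poch (a : ℝ) (n : ℕ) : ℝ := Polynomial.eval a (ascPochhammer ℝ n)

/-- Pochhammer symbol `(a)ₖ` for integer `k`: for `k ≥ 0` the ascending product,
and `(a)₋ₖ = (-1)ᵏ/(1-a)ₖ` for `k ≥ 0`. -/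
noncomputable def pochZ (a : ℝ) (k : ℤ) : ℝ :=
  if 0 ≤ k then poch a k.toNat else (-1) ^ (-k).toNat / poch (1 - a) (-k).toNat

/-- The (generally non-terminating) Clausen series `₃F₂(a,b,c;d,e;1)`. -/
noncomputable def F32 (a b c d e : ℝ) : ℝ :=
  ∑' n : ℕ, poch a n * poch b n * poch c n / (poch d n * poch e n * n.factorial)

/-- A terminating `₃F₂(a,b,c;d,e;1)` summed over `k = 0, …, N`. -/
noncomputable def F32sum (N : ℕ) (a b c d e : ℝ) : ℝ :=
  ∑ k ∈ Finset.range (N + 1),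
    poch a k * poch b k * poch c k / (poch d k * poch e k * k.factorial)

/-- The Kummer confluent hypergeometric function `₁F₁(a;b;x)`. -/
noncomputable def F11 (a b x : ℝ) : ℝ :=
  ∑' n : ℕ, poch a n * x ^ n / (poch b n * n.factorial)

-- Auxiliary lemmas

lemma poch_zero (a : ℝ) : poch a 0 = 1 := by simp [poch]

lemma poch_succ (a : ℝ) (n : ℕ) : poch a (n+1) = poch a n * (a + n) := by
  simp [poch, ascPochhammer_succ_right, Polynomial.eval_mul]

lemma poch_succ' (a : ℝ) (n : ℕ) : poch a (n+1) = a * poch (a+1) n := by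
  simp [poch, ascPochhammer_succ_left, Polynomial.eval_comp]

lemma poch_ne_zero {b : ℝ} (hb : ∀ k : ℕ, b + k ≠ 0) (n : ℕ) : poch b n ≠ 0 := by
  induction n with
  | zero => simp [poch_zero]
  | succ n ih => rw [poch_succ]; exact mul_ne_zero ih (hb n)

noncomputable def cf (a b : ℝ) (n : ℕ) : ℝ := poch a n / (poch b n * n.factorial)

lemma cf_summable {a b : ℝ} (hb : ∀ k : ℕ, b + k ≠ 0) (x : ℝ) :
    Summable (fun n => ‖cf a b n * x ^ n‖) := by
  apply summable_of_ratio_norm_eventually_le (r := 1/2) (by norm_num)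
  rw [Filter.eventually_atTop]
  refine ⟨⌈2*|b|+1⌉₊ + ⌈4*(|a|+1)*|x|⌉₊ + 1, fun n hn => ?_⟩
  have hn1 : (2*|b|+1 : ℝ) ≤ n := by
    calc (2*|b|+1 : ℝ) ≤ ⌈2*|b|+1⌉₊ := Nat.le_ceil _
    _ ≤ n := by exact_mod_cast le_trans (by omega) hn
  have hn2 : (4*(|a|+1)*|x| : ℝ) ≤ n := by
    calc (4*(|a|+1)*|x| : ℝ) ≤ ⌈4*(|a|+1)*|x|⌉₊ := Nat.le_ceil _
    _ ≤ n := by exact_mod_cast le_trans (by omega) hn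
  have hrec : cf a b (n+1) * x ^ (n+1)
      = (cf a b n * x ^ n) * ((a + n) * x / ((b + n) * (n+1))) := by
    have hb' : (b + n) ≠ 0 := hb n
    have hfac : ((n+1 : ℕ).factorial : ℝ) = (n.factorial : ℝ) * (n+1) := by
      push_cast [Nat.factorial_succ]; ring
    have hpb : poch b n ≠ 0 := poch_ne_zero hb n
    have hfn : (n.factorial : ℝ) ≠ 0 := by positivity
    rw [cf, cf, poch_succ, poch_succ, hfac, pow_succ]
    field_simp
  rw [hrec]
  simp only [norm_norm, norm_mul]
  have hb1 : (n:ℝ) - |b| ≥ ((n:ℝ)+1)/2 := by linarith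
  have hbn : |b + (n:ℝ)| ≥ ((n:ℝ)+1)/2 := by
    have h := abs_sub_abs_le_abs_sub ((n:ℝ)) (-b)
    rw [abs_neg, sub_neg_eq_add, abs_of_nonneg (by positivity : (0:ℝ) ≤ (n:ℝ))] at h
    calc ((n:ℝ)+1)/2 ≤ (n:ℝ) - |b| := hb1
    _ ≤ |(n:ℝ) + b| := h
    _ = |b + (n:ℝ)| := by rw [add_comm]
  have han : |a + (n:ℝ)| ≤ |a| + n := by
    calc |a + (n:ℝ)| ≤ |a| + |(n:ℝ)| := abs_add_le _ _
    _ = |a| + n := by rw [abs_of_nonneg (by positivity : (0:ℝ) ≤ (n:ℝ))]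
  have h1 : ‖(a + (n:ℝ)) * x / ((b + n) * ((n:ℝ)+1))‖ ≤ 1/2 := by
    rw [Real.norm_eq_abs, abs_div, abs_mul, abs_mul]
    rw [div_le_iff₀ (mul_pos (abs_pos.mpr (hb n)) (by positivity))]
    have hxa : |a + (n:ℝ)| * |x| ≤ (|a| + n) * |x| := by
      apply mul_le_mul_of_nonneg_right han (abs_nonneg _)
    have habs : |((n:ℝ)+1)| = (n:ℝ)+1 := abs_of_nonneg (by positivity)
    rw [habs]
    have key : (|a| + (n:ℝ)) * |x| ≤ 1/2 * ((((n:ℝ)+1)/2) * ((n:ℝ)+1)) := by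
      nlinarith [mul_le_mul_of_nonneg_left hn2 (Nat.cast_nonneg n : (0:ℝ) ≤ n), abs_nonneg x, abs_nonneg a, mul_nonneg (abs_nonneg a) (abs_nonneg x), (Nat.cast_nonneg n : (0:ℝ) ≤ n)]
    calc |a + (n:ℝ)| * |x| ≤ (|a| + n) * |x| := hxa
    _ ≤ 1/2 * ((((n:ℝ)+1)/2) * ((n:ℝ)+1)) := key
    _ ≤ 1/2 * (|b + (n:ℝ)| * ((n:ℝ)+1)) := by
        apply mul_le_mul_of_nonneg_left _ (by norm_num)
        apply mul_le_mul_of_nonneg_right hbn (by positivity)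
  calc ‖cf a b n‖ * ‖x ^ n‖ * ‖(a + (n:ℝ)) * x / ((b + n) * ((n:ℝ)+1))‖
      ≤ ‖cf a b n‖ * ‖x ^ n‖ * (1/2) := by
        apply mul_le_mul_of_nonneg_left h1 (by positivity)
    _ = 1/2 * (‖cf a b n‖ * ‖x ^ n‖) := by ring


lemma poch_shift {b : ℝ} (k : ℕ) : poch b k * (b + k) = b * poch (b+1) k :=
  (poch_succ b k).symm.trans (poch_succ' b k)

section PT
variable {α γ : ℝ}

-- F1
lemma F1 (hg0 : ∀ k : ℕ, γ + (k:ℝ) ≠ 0) (hg1 : ∀ k : ℕ, γ - 1 + (k:ℝ) ≠ 0) (k : ℕ) : (k:ℝ) * cf α γ k = (γ-1) * (cf α (γ-1) k - cf α γ k) := by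
  have hrel : poch (γ-1) k * ((γ-1) + k) = (γ-1) * poch γ k := by
    have h := poch_shift (b := γ-1) k
    rw [show γ - 1 + 1 = γ by ring] at h
    exact h
  have h1 : poch γ k ≠ 0 := poch_ne_zero hg0 k
  have h2 : poch (γ-1) k ≠ 0 := poch_ne_zero hg1 k
  have hf : (k.factorial : ℝ) ≠ 0 := by positivity
  rw [cf, cf]
  field_simp
  linear_combination (poch α k) * hrel

-- F2
lemma F2 (hg2 : ∀ k : ℕ, 2 - γ + (k:ℝ) ≠ 0) (hg3 : ∀ k : ℕ, 3 - γ + (k:ℝ) ≠ 0) (k : ℕ) : (k:ℝ) * ((-1:ℝ)^k * cf (2-α) (3-γ) k)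
    = (2-γ) * ((-1:ℝ)^k * cf (2-α) (2-γ) k - (-1:ℝ)^k * cf (2-α) (3-γ) k) := by
  have hrel : poch (2-γ) k * ((2-γ) + k) = (2-γ) * poch (3-γ) k := by
    have h := poch_shift (b := 2-γ) k
    rw [show 2 - γ + 1 = 3 - γ by ring] at h
    exact h
  have h1 : poch (3-γ) k ≠ 0 := poch_ne_zero hg3 k
  have h2 : poch (2-γ) k ≠ 0 := poch_ne_zero hg2 k
  have hf : (k.factorial : ℝ) ≠ 0 := by positivity
  rw [cf, cf]
  field_simp
  linear_combination (poch (2-α) k) * hrel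

-- F3
lemma F3 (hg0 : ∀ k : ℕ, γ + (k:ℝ) ≠ 0) (hg1 : ∀ k : ℕ, γ - 1 + (k:ℝ) ≠ 0) (k : ℕ) : (γ-1) * (cf α (γ-1) (k+1) - cf (α-1) (γ-1) (k+1)) = cf α γ k := by
  have e1 : poch α (k+1) = poch α k * (α + k) := poch_succ α k
  have e2 : poch (α-1) (k+1) = (α-1) * poch α k := by
    have h := poch_succ' (α-1) k; rw [show α - 1 + 1 = α by ring] at h; exact h
  have e3 : poch (γ-1) (k+1) = (γ-1) * poch γ k := by
    have h := poch_succ' (γ-1) k; rw [show γ - 1 + 1 = γ by ring] at h; exact h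
  have h1 : poch γ k ≠ 0 := poch_ne_zero hg0 k
  have hg1' : (γ-1) ≠ 0 := by have := hg1 0; simpa using this
  have hf : (k.factorial : ℝ) ≠ 0 := by positivity
  have hfac : ((k+1 : ℕ).factorial : ℝ) = (k.factorial : ℝ) * (k+1) := by
    push_cast [Nat.factorial_succ]; ring
  rw [cf, cf, cf, e1, e2, e3, hfac]
  field_simp
  ring

-- F4
lemma F4 (hg2 : ∀ k : ℕ, 2 - γ + (k:ℝ) ≠ 0) (hg3 : ∀ k : ℕ, 3 - γ + (k:ℝ) ≠ 0) (k : ℕ) : (2-γ) * ((-1:ℝ)^(k+1) * cf (1-α) (2-γ) (k+1) - (-1:ℝ)^(k+1) * cf (2-α) (2-γ) (k+1))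
    = (-1:ℝ)^k * cf (2-α) (3-γ) k := by
  have e1 : poch (2-α) (k+1) = poch (2-α) k * ((2-α) + k) := poch_succ _ k
  have e2 : poch (1-α) (k+1) = (1-α) * poch (2-α) k := by
    have h := poch_succ' (1-α) k; rw [show 1 - α + 1 = 2 - α by ring] at h; exact h
  have e3 : poch (2-γ) (k+1) = (2-γ) * poch (3-γ) k := by
    have h := poch_succ' (2-γ) k; rw [show 2 - γ + 1 = 3 - γ by ring] at h; exact h
  have h1 : poch (3-γ) k ≠ 0 := poch_ne_zero hg3 k
  have hg2' : (2-γ) ≠ 0 := by have := hg2 0; simpa using this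
  have hf : (k.factorial : ℝ) ≠ 0 := by positivity
  have hfac : ((k+1 : ℕ).factorial : ℝ) = (k.factorial : ℝ) * (k+1) := by
    push_cast [Nat.factorial_succ]; ring
  rw [cf, cf, cf, e1, e2, e3, hfac, pow_succ]
  field_simp
  ring

-- F5
lemma F5 (hg2 : ∀ k : ℕ, 2 - γ + (k:ℝ) ≠ 0) (hg3 : ∀ k : ℕ, 3 - γ + (k:ℝ) ≠ 0) (k : ℕ) : ((k:ℝ)+1) * ((-1:ℝ)^(k+1) * cf (1-α) (2-γ) (k+1))
    = (α-1)/(2-γ) * ((-1:ℝ)^k * cf (2-α) (3-γ) k) := by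
  have e2 : poch (1-α) (k+1) = (1-α) * poch (2-α) k := by
    have h := poch_succ' (1-α) k; rw [show 1 - α + 1 = 2 - α by ring] at h; exact h
  have e3 : poch (2-γ) (k+1) = (2-γ) * poch (3-γ) k := by
    have h := poch_succ' (2-γ) k; rw [show 2 - γ + 1 = 3 - γ by ring] at h; exact h
  have h1 : poch (3-γ) k ≠ 0 := poch_ne_zero hg3 k
  have hg2' : (2-γ) ≠ 0 := by have := hg2 0; simpa using this
  have hf : (k.factorial : ℝ) ≠ 0 := by positivity
  have hfac : ((k+1 : ℕ).factorial : ℝ) = (k.factorial : ℝ) * (k+1) := by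
    push_cast [Nat.factorial_succ]; ring
  rw [cf, cf, e2, e3, hfac, pow_succ]
  field_simp
  ring

-- F6
lemma F6 (hg0 : ∀ k : ℕ, γ + (k:ℝ) ≠ 0) (hg1 : ∀ k : ℕ, γ - 1 + (k:ℝ) ≠ 0) (k : ℕ) : ((k:ℝ)+1) * cf (α-1) (γ-1) (k+1) = (α-1)/(γ-1) * cf α γ k := by
  have e2 : poch (α-1) (k+1) = (α-1) * poch α k := by
    have h := poch_succ' (α-1) k; rw [show α - 1 + 1 = α by ring] at h; exact h
  have e3 : poch (γ-1) (k+1) = (γ-1) * poch γ k := by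
    have h := poch_succ' (γ-1) k; rw [show γ - 1 + 1 = γ by ring] at h; exact h
  have h1 : poch γ k ≠ 0 := poch_ne_zero hg0 k
  have hg1' : (γ-1) ≠ 0 := by have := hg1 0; simpa using this
  have hf : (k.factorial : ℝ) ≠ 0 := by positivity
  have hfac : ((k+1 : ℕ).factorial : ℝ) = (k.factorial : ℝ) * (k+1) := by
    push_cast [Nat.factorial_succ]; ring
  rw [cf, cf, e2, e3, hfac]
  field_simp
end PT


lemma key_abstract (u v e f K : ℝ) (hu : u ≠ 0) (hv : v ≠ 0) (huv : u + v = 1)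
    (hKu : K * u = -e) (hKv : K * v = -f) (hef : f * u = e * v)
    (a b c d ta tb : ℕ → ℝ)
    (hF1 : ∀ k : ℕ, (k:ℝ) * a k = u * (ta k - a k))
    (hF2 : ∀ k : ℕ, (k:ℝ) * b k = v * (tb k - b k))
    (hF3 : ∀ k : ℕ, u * (ta (k+1) - d (k+1)) = a k) (hF30 : ta 0 = d 0)
    (hF4 : ∀ k : ℕ, v * (c (k+1) - tb (k+1)) = b k) (hF40 : c 0 = tb 0)
    (hF5 : ∀ k : ℕ, ((k:ℝ)+1) * c (k+1) = e * b k)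
    (hF6 : ∀ k : ℕ, ((k:ℝ)+1) * d (k+1) = f * a k)
    (n : ℕ) :
    K * (∑ k ∈ range (n+1), a k * b (n-k)) + ∑ k ∈ range (n+2), c k * d (n+1-k) = 0 := by
  set P : ℝ := ∑ k ∈ range (n+1), a k * b (n-k) with hP
  set Q : ℝ := ∑ k ∈ range (n+2), c k * d (n+1-k) with hQ
  set X1 : ℝ := ∑ k ∈ range (n+1), ta k * b (n-k) with hX1
  set X2 : ℝ := ∑ k ∈ range (n+1), a k * tb (n-k) with hX2
  set X3 : ℝ := ∑ k ∈ range (n+1), b k * d (n-k) with hX3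
  set X4 : ℝ := ∑ k ∈ range (n+1), c k * a (n-k) with hX4
  set X5 : ℝ := ∑ k ∈ range (n+1), d k * b (n-k) with hX5
  set X6 : ℝ := ∑ k ∈ range (n+1), tb k * a (n-k) with hX6
  set W : ℝ := ∑ k ∈ range n, a k * b (n-1-k) with hW
  -- hA
  have hA : ((n:ℝ)+1) * P = u * X1 + v * X2 := by
    rw [hP, hX1, hX2, Finset.mul_sum, Finset.mul_sum, Finset.mul_sum, ← Finset.sum_add_distrib]
    refine Finset.sum_congr rfl fun k hk => ?_
    have hk' : k ≤ n := Nat.lt_succ_iff.mp (mem_range.mp hk)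
    have h1 := hF1 k
    have h2 := hF2 (n-k)
    have hcast : ((n-k:ℕ):ℝ) = (n:ℝ) - k := by
      rw [Nat.cast_sub hk']
    rw [hcast] at h2
    linear_combination b (n-k) * h1 + a k * h2 - (a k * b (n-k)) * huv
  -- hB
  have hQ1 : ∑ k ∈ range (n+2), (k:ℝ) * (c k * d (n+1-k)) = e * X3 := by
    rw [Finset.sum_range_succ']
    simp only [Nat.cast_zero, zero_mul, add_zero]
    rw [hX3, Finset.mul_sum]
    refine Finset.sum_congr rfl fun k hk => ?_
    have h5 := hF5 k
    rw [show n + 1 - (k+1) = n - k from by omega]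
    push_cast
    linear_combination d (n-k) * h5
  have hQ2 : ∑ k ∈ range (n+2), ((n+1-k:ℕ):ℝ) * (c k * d (n+1-k)) = f * X4 := by
    rw [Finset.sum_range_succ]
    rw [show n + 1 - (n+1) = 0 from by omega]
    simp only [Nat.cast_zero, zero_mul, add_zero]
    rw [hX4, Finset.mul_sum]
    refine Finset.sum_congr rfl fun k hk => ?_
    have hk' : k ≤ n := Nat.lt_succ_iff.mp (mem_range.mp hk)
    have h6 := hF6 (n-k)
    rw [show n + 1 - k = (n - k) + 1 from by omega]
    rw [show (((n-k)+1 : ℕ):ℝ) = ((n-k:ℕ):ℝ)+1 from by push_cast; ring]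
    linear_combination c k * h6
  have hB : ((n:ℝ)+1) * Q = e * X3 + f * X4 := by
    rw [hQ, Finset.mul_sum, ← hQ1, ← hQ2, ← Finset.sum_add_distrib]
    refine Finset.sum_congr rfl fun k hk => ?_
    have hk' : k ≤ n + 1 := Nat.lt_succ_iff.mp (mem_range.mp hk)
    have hcast : ((n+1-k:ℕ):ℝ) = (n:ℝ) + 1 - k := by
      rw [Nat.cast_sub hk']; push_cast; ring
    rw [hcast]; ring
  -- hC
  have hC : u * X1 = u * X5 + W := by
    have base : ∑ k ∈ range (n+1), (u * (ta k - d k)) * b (n-k) = W := by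
      rw [Finset.sum_range_succ', hF30]
      simp only [sub_self, mul_zero, zero_mul, add_zero]
      rw [hW]
      refine Finset.sum_congr rfl fun k hk => ?_
      rw [show n - (k+1) = n-1-k from by omega, hF3 k]
    rw [← base, hX1, hX5, Finset.mul_sum, Finset.mul_sum, ← Finset.sum_add_distrib]
    refine Finset.sum_congr rfl fun k _ => by ring
  -- hW' and hD
  have hWrefl : ∑ k ∈ range n, b k * a (n-1-k) = W := by
    rw [hW, ← Finset.sum_range_reflect (fun k => a k * b (n-1-k)) n]
    refine Finset.sum_congr rfl fun k hk => ?_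
    have hk' : k < n := mem_range.mp hk
    rw [show n-1-(n-1-k) = k from by omega]
    ring
  have hD : v * X4 = v * X6 + W := by
    have base : ∑ k ∈ range (n+1), (v * (c k - tb k)) * a (n-k) = W := by
      rw [Finset.sum_range_succ', hF40]
      simp only [sub_self, mul_zero, zero_mul, add_zero]
      rw [← hWrefl]
      refine Finset.sum_congr rfl fun k hk => ?_
      rw [show n - (k+1) = n-1-k from by omega, hF4 k]
    rw [← base, hX4, hX6, Finset.mul_sum, Finset.mul_sum, ← Finset.sum_add_distrib]
    refine Finset.sum_congr rfl fun k _ => by ring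
  -- hE, hF
  have hE : X2 = X6 := by
    rw [hX2, hX6, ← Finset.sum_range_reflect (fun k => tb k * a (n-k)) (n+1)]
    refine Finset.sum_congr rfl fun k hk => ?_
    have hk' : k ≤ n := Nat.lt_succ_iff.mp (mem_range.mp hk)
    rw [show n+1-1-k = n-k from by omega, show n-(n-k) = k from by omega]
    ring
  have hF : X3 = X5 := by
    rw [hX3, hX5, ← Finset.sum_range_reflect (fun k => d k * b (n-k)) (n+1)]
    refine Finset.sum_congr rfl fun k hk => ?_
    have hk' : k ≤ n := Nat.lt_succ_iff.mp (mem_range.mp hk)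
    rw [show n+1-1-k = n-k from by omega, show n-(n-k) = k from by omega]
    ring
  -- final assembly
  have goal0 : u*v*K*(u*X1+v*X2) + u*v*(e*X3+f*X4) = 0 := by
    linear_combination (u*v*X1)*hKu + (u*v*X2)*hKv + (-e*v)*hC + (f*u)*hD
      + (-f*u*v)*hE + (e*u*v)*hF + W*hef
  have main : (((n:ℝ)+1) * (u*v)) * (K * P + Q) = 0 := by
    linear_combination (u*v*K)*hA + (u*v)*hB + goal0
  have hnz : ((n:ℝ)+1) * (u*v) ≠ 0 :=
    mul_ne_zero (by positivity) (mul_ne_zero hu hv)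
  exact (mul_eq_zero.mp main).resolve_left hnz

set_option maxHeartbeats 2000000 in
theorem Kummer_example1 (α γ : ℝ) (hγ : ∀ k : ℤ, γ ≠ (k : ℝ)) (t : ℝ) :
    (α - 1) * t / ((γ - 1) * (γ - 2)) * F11 α γ t * F11 (2 - α) (3 - γ) (-t) +
      F11 (1 - α) (2 - γ) (-t) * F11 (α - 1) (γ - 1) t = 1 := by
  -- nonvanishing facts
  have hg0 : ∀ k : ℕ, γ + (k:ℝ) ≠ 0 := by
    intro k h; exact hγ (-(k:ℤ)) (by push_cast; linarith)
  have hg1 : ∀ k : ℕ, γ - 1 + (k:ℝ) ≠ 0 := by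
    intro k h; exact hγ (1 - (k:ℤ)) (by push_cast; linarith)
  have hg2 : ∀ k : ℕ, 2 - γ + (k:ℝ) ≠ 0 := by
    intro k h; exact hγ (2 + (k:ℤ)) (by push_cast; linarith)
  have hg3 : ∀ k : ℕ, 3 - γ + (k:ℝ) ≠ 0 := by
    intro k h; exact hγ (3 + (k:ℤ)) (by push_cast; linarith)
  have hu : γ - 1 ≠ 0 := by simpa using hg1 0
  have hv : 2 - γ ≠ 0 := by simpa using hg2 0
  have hγ2 : γ - 2 ≠ 0 := fun h => hv (by linarith)
  -- sequences
  set a : ℕ → ℝ := fun k => cf α γ k with ha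
  set b : ℕ → ℝ := fun k => (-1:ℝ)^k * cf (2-α) (3-γ) k with hb
  set c : ℕ → ℝ := fun k => (-1:ℝ)^k * cf (1-α) (2-γ) k with hc
  set d : ℕ → ℝ := fun k => cf (α-1) (γ-1) k with hd
  set K : ℝ := (α-1)/((γ-1)*(γ-2)) with hK
  set Pc : ℕ → ℝ := fun n => ∑ k ∈ range (n+1), a k * b (n-k) with hPc
  set Qc : ℕ → ℝ := fun n => ∑ k ∈ range (n+1), c k * d (n-k) with hQc
  -- key identity
  have key : ∀ n : ℕ, K * Pc n + Qc (n+1) = 0 := by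
    intro n
    refine key_abstract (γ-1) (2-γ) ((α-1)/(2-γ)) ((α-1)/(γ-1)) K hu hv (by ring)
      (by rw [hK]; field_simp; ring) (by rw [hK]; field_simp; ring)
      (by field_simp)
      a b c d (fun k => cf α (γ-1) k) (fun k => (-1:ℝ)^k * cf (2-α) (2-γ) k)
      (fun k => F1 hg0 hg1 k) (fun k => F2 hg2 hg3 k)
      (fun k => F3 hg0 hg1 k) (by simp [hd, cf, poch_zero])
      (fun k => F4 hg2 hg3 k) (by simp [hc, hb, cf, poch_zero])
      (fun k => F5 hg2 hg3 k) (fun k => F6 hg0 hg1 k) n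
  -- summability
  have sA : Summable fun n => ‖cf α γ n * t^n‖ := cf_summable hg0 t
  have sB : Summable fun n => ‖cf (2-α) (3-γ) n * (-t)^n‖ := cf_summable hg3 (-t)
  have sC : Summable fun n => ‖cf (1-α) (2-γ) n * (-t)^n‖ := cf_summable hg2 (-t)
  have sD : Summable fun n => ‖cf (α-1) (γ-1) n * t^n‖ := cf_summable hg1 t
  -- F11 as cf-series
  have hF11 : ∀ p q x : ℝ, F11 p q x = ∑' n : ℕ, cf p q n * x^n := by
    intro p q x
    exact tsum_congr fun n => by rw [cf]; ring
  -- products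
  have eqAB : F11 α γ t * F11 (2-α) (3-γ) (-t) = ∑' n, Pc n * t^n := by
    rw [hF11, hF11, tsum_mul_tsum_eq_tsum_sum_range_of_summable_norm sA sB]
    refine tsum_congr fun n => ?_
    rw [hPc, Finset.sum_mul]
    refine Finset.sum_congr rfl fun k hk => ?_
    have hk' : k ≤ n := Nat.lt_succ_iff.mp (mem_range.mp hk)
    rw [ha, hb]
    simp only
    rw [neg_pow, show t^n = t^k * t^(n-k) from by rw [← pow_add]; congr 1; omega]
    ring
  have eqCD : F11 (1-α) (2-γ) (-t) * F11 (α-1) (γ-1) t = ∑' n, Qc n * t^n := by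
    rw [hF11, hF11, tsum_mul_tsum_eq_tsum_sum_range_of_summable_norm sC sD]
    refine tsum_congr fun n => ?_
    rw [hQc, Finset.sum_mul]
    refine Finset.sum_congr rfl fun k hk => ?_
    have hk' : k ≤ n := Nat.lt_succ_iff.mp (mem_range.mp hk)
    rw [hc, hd]
    simp only
    rw [neg_pow, show t^n = t^k * t^(n-k) from by rw [← pow_add]; congr 1; omega]
    ring
  have hPs : Summable fun n => Pc n * t^n := by
    refine ((summable_norm_sum_mul_range_of_summable_norm sA sB).of_norm).congr fun n => ?_
    rw [hPc, Finset.sum_mul]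
    refine Finset.sum_congr rfl fun k hk => ?_
    have hk' : k ≤ n := Nat.lt_succ_iff.mp (mem_range.mp hk)
    rw [ha, hb]
    simp only
    rw [neg_pow, show t^n = t^k * t^(n-k) from by rw [← pow_add]; congr 1; omega]
    ring
  have hQs : Summable fun n => Qc n * t^n := by
    refine ((summable_norm_sum_mul_range_of_summable_norm sC sD).of_norm).congr fun n => ?_
    rw [hQc, Finset.sum_mul]
    refine Finset.sum_congr rfl fun k hk => ?_
    have hk' : k ≤ n := Nat.lt_succ_iff.mp (mem_range.mp hk)
    rw [hc, hd]
    simp only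
    rw [neg_pow, show t^n = t^k * t^(n-k) from by rw [← pow_add]; congr 1; omega]
    ring
  have hQ0 : Qc 0 = 1 := by simp [hQc, hc, hd, cf, poch_zero]
  have hsplit : ∑' n, Qc n * t^n = Qc 0 * t^0 + ∑' n, Qc (n+1) * t^(n+1) :=
    hQs.tsum_eq_zero_add
  have hKt : (α - 1) * t / ((γ - 1) * (γ - 2)) * F11 α γ t * F11 (2-α) (3-γ) (-t)
      = ∑' n, (K * Pc n) * t^(n+1) := by
    rw [mul_assoc, eqAB, ← tsum_mul_left]
    refine tsum_congr fun n => ?_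
    rw [hK, pow_succ]
    ring
  have s1 : Summable fun n => (K * Pc n) * t^(n+1) := by
    refine (hPs.mul_left (K * t)).congr fun n => ?_
    rw [pow_succ]; ring
  have s2 : Summable fun n => Qc (n+1) * t^(n+1) := (summable_nat_add_iff 1).mpr hQs
  have hzero : ∑' n, (K * Pc n) * t^(n+1) + ∑' n, Qc (n+1) * t^(n+1) = 0 := by
    rw [← s1.tsum_add s2]
    have : ∀ n : ℕ, (K * Pc n) * t^(n+1) + Qc (n+1) * t^(n+1) = 0 := fun n => by
      linear_combination (t^(n+1)) * key n
    rw [tsum_congr this, tsum_zero]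
  rw [hKt, eqCD, hsplit, hQ0]
  simp only [pow_zero, mul_one]
  linarith [hzero]
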